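/- Let m, n, k_1,…,k_m, l_1,…,l_n be positive integers and 1 ≤ j ≤ m. Then z_{k_1}⋯z_{k_m} * z_{l_1}⋯z_{l_n} = Σ_{i=0}^{n} [ (z_{k_1}⋯z_{k_{j-1}} * z_{l_1}⋯z_{l_i}) z_{k_j} + (z_{k_1}⋯z_{k_{j-1}} * z_{l_1}⋯z_{l_{i-1}}) z_{k_j+l_i} ] (z_{k_{j+1}}⋯z_{k_m} * z_{l_{i+1}}⋯z_{l_n}), with the conventions that an empty word product z_{k_i}⋯z_{k_{i-1}} = 1 and z_{k_i}⋯z_{k_{i-2}} = 0. -/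
import Mathlib


open MonoidAlgebra Finset

abbrev H : Type := MonoidAlgebra ℚ (FreeMonoid ℕ+)

noncomputable def word (w : List ℕ+) : H := MonoidAlgebra.single (FreeMonoid.ofList w) 1

noncomputable def z (k : ℕ+) : H := word [k]

noncomputable def st : List ℕ+ → List ℕ+ → H
  | [], w => word w
  | k :: w1, [] => word (k :: w1)
  | k :: w1, l :: w2 =>
      z k * st w1 (l :: w2) + z l * st (k :: w1) w2 + z (k + l) * st w1 w2
termination_by a b => a.length + b.length
decreasing_by all_goals (simp; try omega)

lemma word_mul (u v : List ℕ+) : word u * word v = word (u ++ v) := by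
  simp [word, MonoidAlgebra.single_mul_single]
lemma word_nil : word [] = 1 := by
  simp [word, MonoidAlgebra.one_def]
lemma word_cons (k : ℕ+) (w : List ℕ+) : word (k :: w) = z k * word w := by
  rw [z, word_mul]; rfl
lemma st_nil_left (w : List ℕ+) : st [] w = word w := by simp [st]
lemma st_nil_right (w : List ℕ+) : st w [] = word w := by cases w <;> simp [st]
lemma st_cons_cons (k l : ℕ+) (w1 w2 : List ℕ+) :
    st (k :: w1) (l :: w2) =
      z k * st w1 (l :: w2) + z l * st (k :: w1) w2 + z (k + l) * st w1 w2 := by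
  rw [st]
lemma st_cons_nil (k : ℕ+) (w : List ℕ+) : st (k :: w) [] = z k * st w [] := by
  rw [st_nil_right, st_nil_right, word_cons]

noncomputable def G (x : List ℕ+) (k : ℕ+) (y : List ℕ+) (b : List ℕ+) (i : ℕ) : H :=
  (st x (b.take i) * z k
    + if 1 ≤ i then st x (b.take (i - 1)) * z (k + b.getD (i - 1) 1) else 0)
  * st y (b.drop i)

lemma G_zero (x : List ℕ+) (k : ℕ+) (y b : List ℕ+) :
    G x k y b 0 = st x [] * (z k * st y b) := by
  simp [G, mul_assoc]

lemma key1 (k l : ℕ+) (y w2 : List ℕ+) (i : ℕ) :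
    G [] k y (l :: w2) (i + 1)
      = z l * G [] k y w2 i + (if i = 0 then z (k + l) * st y w2 else 0) := by
  rcases i with _ | i
  · simp [G, st_nil_left, word_cons, word_nil, mul_add, add_mul, mul_assoc]
  · simp [G, st_nil_left, word_cons, word_nil, Nat.le_add_left, mul_add, add_mul, mul_assoc]

lemma key2 (k k1 l : ℕ+) (y x' w2 : List ℕ+) (i : ℕ) :
    G (k1 :: x') k y (l :: w2) (i + 1)
      = z k1 * G x' k y (l :: w2) (i + 1) + z l * G (k1 :: x') k y w2 i
        + z (k1 + l) * G x' k y w2 i := by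
  rcases i with _ | i
  · simp only [G, List.take_succ_cons, List.take_zero, List.drop_succ_cons, List.drop_zero,
      List.getD_cons_zero, Nat.add_sub_cancel, if_pos (Nat.le_refl 1)]
    rw [st_cons_cons]
    simp only [st_cons_nil, if_neg (by omega : ¬ (1:ℕ) ≤ 0)]
    simp only [mul_add, add_mul, mul_assoc, add_zero, mul_zero]
    abel
  · simp only [G, List.take_succ_cons, List.drop_succ_cons,
      List.getD_cons_succ, Nat.add_sub_cancel, if_pos (Nat.le_add_left 1 (i+1)),
      if_pos (Nat.le_add_left 1 i)]
    rw [st_cons_cons, st_cons_cons]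
    simp only [mul_add, add_mul, mul_assoc, add_zero, mul_zero]
    abel

lemma aux (k : ℕ+) (y : List ℕ+) : ∀ x b : List ℕ+,
    st (x ++ k :: y) b = ∑ i ∈ Finset.range (b.length + 1), G x k y b i := by
  intro x
  induction x with
  | nil =>
    intro b
    induction b with
    | nil =>
      simp [G, st_nil_left, st_nil_right, word_nil, word_cons]
    | cons l w2 ihb =>
      rw [List.nil_append] at ihb ⊢
      rw [st_cons_cons, ihb,
        show (l :: w2).length + 1 = w2.length + 1 + 1 from rfl,
        Finset.sum_range_succ' (fun i => G [] k y (l :: w2) i) (w2.length + 1)]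
      simp only [key1, G_zero, st_nil_left, word_nil, one_mul]
      rw [Finset.sum_add_distrib, ← Finset.mul_sum, Finset.sum_ite_eq' (Finset.range (w2.length + 1)) 0]
      simp only [Finset.mem_range, Nat.succ_pos, if_pos]
      abel
  | cons k1 x' ihx =>
    intro b
    induction b with
    | nil =>
      simp [st_nil_right, G, st_nil_right, z, word_mul]
    | cons l w2 ihb =>
      rw [List.cons_append] at ihb ⊢
      rw [st_cons_cons, ihb, ihx (l :: w2), ihx w2,
        show (l :: w2).length + 1 = w2.length + 1 + 1 from rfl,
        Finset.sum_range_succ' (fun i => G x' k y (l :: w2) i) (w2.length + 1),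
        Finset.sum_range_succ' (fun i => G (k1 :: x') k y (l :: w2) i) (w2.length + 1)]
      simp only [key2, G_zero, st_cons_nil]
      simp only [Finset.sum_add_distrib, ← Finset.mul_sum]
      simp only [mul_add, add_mul, mul_assoc]
      abel

theorem st_recursive (a b : List ℕ+) (hn : 1 ≤ b.length) (j : ℕ)
    (hj1 : 1 ≤ j) (hj2 : j ≤ a.length) :
    st a b =
      ∑ i ∈ Finset.range (b.length + 1),
        (st (a.take (j - 1)) (b.take i) * z (a.getD (j - 1) 1)
          + if 1 ≤ i then
              st (a.take (j - 1)) (b.take (i - 1)) * z (a.getD (j - 1) 1 + b.getD (i - 1) 1)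
            else 0)
        * st (a.drop j) (b.drop i) := by
  have h1 : j - 1 < a.length := by omega
  have h2 : a = a.take (j - 1) ++ a.getD (j - 1) 1 :: a.drop j := by
    conv_lhs => rw [← List.take_append_drop (j - 1) a]
    rw [List.drop_eq_getElem_cons h1, List.getD_eq_getElem a 1 h1,
      show j - 1 + 1 = j by omega]
  conv_lhs => rw [h2]
  exact aux (a.getD (j - 1) 1) (a.drop j) (a.take (j - 1)) b
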